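/- Let m_1, …, m_s (s ≥ 1) be monomials of degree k ≥ 1 in the polynomial ring ℂ[x_1, …, x_n], let I be the (monomial) ideal generated by all monomials that divide none of m_1, …, m_s, and let R = ℂ[x_1, …, x_n]/I with its standard grading. Let ω ∈ R_1 be the image of x_1 + … + x_n. Then for every i with 0 ≤ i and 2i < k, the multiplication map R_i → R_{k−i}, α ↦ α · ω^{k−2i}, is injective. -/

import Mathlib

namespace IHLAux

open scoped Classical

variable {n : ℕ}

abbrev V (n : ℕ) := (Fin n →₀ ℕ) → ℂ

def wt (d : Fin n →₀ ℕ) : ℕ := ∑ t, d t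

/-- coefficient for the lowering operator -/
def cf (A d : Fin n →₀ ℕ) (t : Fin n) : ℂ := (((d t + 1) * (A t - d t) : ℕ) : ℂ)

noncomputable def opE (A : Fin n →₀ ℕ) : Module.End ℂ (V n) where
  toFun c := fun d => if d ≤ A then ∑ t, (if 1 ≤ d t then c (d - Finsupp.single t 1) else 0) else 0
  map_add' c c' := by
    funext d
    by_cases hd : d ≤ A
    · simp only [hd, if_true, Pi.add_apply, ← Finset.sum_add_distrib]
      refine Finset.sum_congr rfl fun t _ => ?_
      split_ifs <;> simp
    · simp [hd]
  map_smul' a c := by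
    funext d
    by_cases hd : d ≤ A
    · simp only [hd, if_true, Pi.smul_apply, smul_eq_mul, RingHom.id_apply, Finset.mul_sum]
      refine Finset.sum_congr rfl fun t _ => ?_
      split_ifs <;> simp
    · simp [hd]

noncomputable def opF (A : Fin n →₀ ℕ) : Module.End ℂ (V n) where
  toFun c := fun d => if d ≤ A then ∑ t, cf A d t * c (d + Finsupp.single t 1) else 0
  map_add' c c' := by
    funext d
    by_cases hd : d ≤ A
    · simp only [hd, if_true, Pi.add_apply, ← Finset.sum_add_distrib]
      refine Finset.sum_congr rfl fun t _ => ?_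
      ring
    · simp [hd]
  map_smul' a c := by
    funext d
    by_cases hd : d ≤ A
    · simp only [hd, if_true, Pi.smul_apply, smul_eq_mul, RingHom.id_apply, Finset.mul_sum]
      refine Finset.sum_congr rfl fun t _ => ?_
      ring
    · simp [hd]

noncomputable def opH (A : Fin n →₀ ℕ) : Module.End ℂ (V n) where
  toFun c := fun d => if d ≤ A then (2 * (wt d : ℂ) - (wt A : ℂ)) * c d else 0
  map_add' c c' := by
    funext d
    by_cases hd : d ≤ A <;> simp [hd, mul_add]
  map_smul' a c := by
    funext d
    by_cases hd : d ≤ A <;> simp [hd] <;> ring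

lemma opE_apply (A : Fin n →₀ ℕ) (c : V n) (d : Fin n →₀ ℕ) :
    opE A c d = if d ≤ A then ∑ t, (if 1 ≤ d t then c (d - Finsupp.single t 1) else 0) else 0 :=
  rfl

lemma opF_apply (A : Fin n →₀ ℕ) (c : V n) (d : Fin n →₀ ℕ) :
    opF A c d = if d ≤ A then ∑ t, cf A d t * c (d + Finsupp.single t 1) else 0 := rfl

lemma opH_apply (A : Fin n →₀ ℕ) (c : V n) (d : Fin n →₀ ℕ) :
    opH A c d = if d ≤ A then (2 * (wt d : ℂ) - (wt A : ℂ)) * c d else 0 := rfl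

-- Finsupp facts
lemma le_apply {d A : Fin n →₀ ℕ} (hd : d ≤ A) (t : Fin n) : d t ≤ A t := hd t

lemma sub_single_le {d A : Fin n →₀ ℕ} (hd : d ≤ A) (t : Fin n) :
    d - Finsupp.single t 1 ≤ A := tsub_le_self.trans hd

lemma sub_single_apply (d : Fin n →₀ ℕ) (t u : Fin n) :
    (d - Finsupp.single t 1 : Fin n →₀ ℕ) u = d u - (if t = u then 1 else 0) := by
  rw [Finsupp.tsub_apply, Finsupp.single_apply]

lemma add_single_apply (d : Fin n →₀ ℕ) (t u : Fin n) :
    (d + Finsupp.single t 1 : Fin n →₀ ℕ) u = d u + (if t = u then 1 else 0) := by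
  rw [Finsupp.add_apply, Finsupp.single_apply]

lemma wt_add_single (d : Fin n →₀ ℕ) (u : Fin n) : wt (d + Finsupp.single u 1) = wt d + 1 := by
  unfold wt
  simp only [add_single_apply, Finset.sum_add_distrib, Finset.sum_ite_eq, Finset.mem_univ,
    if_true]

lemma wt_sub_single {d : Fin n →₀ ℕ} {t : Fin n} (h : 1 ≤ d t) :
    wt (d - Finsupp.single t 1) + 1 = wt d := by
  unfold wt
  rw [Finset.sum_congr rfl (fun u _ => sub_single_apply d t u)]
  rw [← Finset.add_sum_erase _ (fun u => d u - if t = u then 1 else 0) (Finset.mem_univ t),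
      ← Finset.add_sum_erase _ (fun u => d u) (Finset.mem_univ t)]
  have h1 : ∀ u ∈ Finset.univ.erase t, (d u - if t = u then 1 else 0) = d u := by
    intro u hu
    rw [if_neg (Finset.ne_of_mem_erase hu).symm, Nat.sub_zero]
  rw [Finset.sum_congr rfl h1, if_pos rfl]
  have hS : ∑ x ∈ Finset.univ.erase t, d x = (Finset.univ.erase t).sum ⇑d := rfl
  rw [hS]
  omega

lemma sub_add_single {d : Fin n →₀ ℕ} {t : Fin n} (h : 1 ≤ d t) :
    d - Finsupp.single t 1 + Finsupp.single t 1 = d := by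
  ext u
  rw [add_single_apply, sub_single_apply]
  by_cases hu : t = u
  · subst hu; simp; omega
  · simp [hu]

lemma add_sub_single (d : Fin n →₀ ℕ) (t : Fin n) :
    d + Finsupp.single t 1 - Finsupp.single t 1 = d := by
  ext u
  rw [sub_single_apply, add_single_apply]
  by_cases hu : t = u <;> simp [hu]

lemma sub_add_eq_add_sub (d : Fin n →₀ ℕ) {t u : Fin n} (h : t ≠ u) :
    d - Finsupp.single t 1 + Finsupp.single u 1 = d + Finsupp.single u 1 - Finsupp.single t 1 := by
  ext x
  rw [add_single_apply, sub_single_apply, sub_single_apply, add_single_apply]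
  by_cases hx : t = x
  · subst hx
    simp [Ne.symm h]
  · by_cases hx2 : u = x <;> simp [hx, hx2]

lemma cf_zero_of_not_le {d A : Fin n →₀ ℕ} (hd : d ≤ A) {u : Fin n}
    (h : ¬ d + Finsupp.single u 1 ≤ A) : cf A d u = 0 := by
  unfold cf
  have : A u - d u = 0 := by
    by_contra hc
    apply h
    rw [Finsupp.le_def]
    intro x
    rw [add_single_apply]
    by_cases hx : u = x
    · rw [if_pos hx, ← hx]
      have := le_apply hd u
      omega
    · rw [if_neg hx]
      have := le_apply hd x
      omega
  simp [this]

lemma cf_cast {d A : Fin n →₀ ℕ} (hd : d ≤ A) (t : Fin n) :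
    cf A d t = ((d t : ℂ) + 1) * ((A t : ℂ) - (d t : ℂ)) := by
  unfold cf
  have := le_apply hd t
  push_cast [this]
  ring


-- ### The sl2 relations

lemma hHE_eq (A : Fin n →₀ ℕ) :
    opH A * opE A = opE A * opH A + 2 • opE A := by
  apply LinearMap.ext
  intro c
  funext d
  simp only [LinearMap.add_apply, LinearMap.smul_apply, Module.End.mul_apply, Pi.add_apply,
    Pi.smul_apply, opE_apply, opH_apply, smul_eq_mul]
  by_cases hd : d ≤ A
  · simp only [hd, if_true]
    rw [Finset.mul_sum, Finset.smul_sum, ← Finset.sum_add_distrib]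
    refine Finset.sum_congr rfl fun t _ => ?_
    by_cases ht : 1 ≤ d t
    · simp only [ht, if_true, if_pos (sub_single_le hd t), smul_ite, smul_zero]
      have hw : ((wt (d - Finsupp.single t 1) : ℂ)) = (wt d : ℂ) - 1 := by
        have := wt_sub_single ht
        push_cast [← this]
        ring
      rw [hw, nsmul_eq_mul]
      push_cast
      ring
    · simp [ht]
  · simp [hd]

lemma hHF_eq (A : Fin n →₀ ℕ) :
    opH A * opF A = opF A * opH A - 2 • opF A := by
  apply LinearMap.ext
  intro c
  funext d
  simp only [LinearMap.sub_apply, LinearMap.smul_apply, Module.End.mul_apply, Pi.sub_apply,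
    Pi.smul_apply, opF_apply, opH_apply, smul_eq_mul]
  by_cases hd : d ≤ A
  · simp only [hd, if_true]
    rw [Finset.mul_sum, Finset.smul_sum, ← Finset.sum_sub_distrib]
    refine Finset.sum_congr rfl fun u _ => ?_
    by_cases hu : d + Finsupp.single u 1 ≤ A
    · rw [if_pos hu]
      have hw : ((wt (d + Finsupp.single u 1) : ℂ)) = (wt d : ℂ) + 1 := by
        push_cast [wt_add_single]
        ring
      rw [hw, nsmul_eq_mul]
      push_cast
      ring
    · rw [if_neg hu, cf_zero_of_not_le hd hu, nsmul_eq_mul]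
      ring
  · simp [hd]

lemma hH_eq (A : Fin n →₀ ℕ) :
    opE A * opF A - opF A * opE A = opH A := by
  apply LinearMap.ext
  intro c
  funext d
  simp only [LinearMap.sub_apply, Module.End.mul_apply, Pi.sub_apply, opE_apply, opF_apply,
    opH_apply]
  by_cases hd : d ≤ A
  · simp only [hd, if_true]
    have L1 : (∑ t, if 1 ≤ d t then
          (if d - Finsupp.single t 1 ≤ A then
            ∑ u, cf A (d - Finsupp.single t 1) u *
              c (d - Finsupp.single t 1 + Finsupp.single u 1) else 0) else 0)
        = ∑ t, ∑ u, (if 1 ≤ d t then cf A (d - Finsupp.single t 1) u *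
            c (d - Finsupp.single t 1 + Finsupp.single u 1) else 0) := by
      refine Finset.sum_congr rfl fun t _ => ?_
      by_cases ht : 1 ≤ d t
      · rw [if_pos ht, if_pos (sub_single_le hd t)]
        exact Finset.sum_congr rfl fun u _ => (if_pos ht).symm
      · rw [if_neg ht]
        symm
        simp [ht]
    have L2 : (∑ u, cf A d u * (if d + Finsupp.single u 1 ≤ A then
          ∑ t, (if 1 ≤ (d + Finsupp.single u 1 : Fin n →₀ ℕ) t then
            c (d + Finsupp.single u 1 - Finsupp.single t 1) else 0) else 0))
        = ∑ t, ∑ u, cf A d u * (if 1 ≤ (d + Finsupp.single u 1 : Fin n →₀ ℕ) t then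
            c (d + Finsupp.single u 1 - Finsupp.single t 1) else 0) := by
      rw [Finset.sum_comm]
      refine Finset.sum_congr rfl fun u _ => ?_
      by_cases hu : d + Finsupp.single u 1 ≤ A
      · rw [if_pos hu, Finset.mul_sum]
      · rw [if_neg hu, cf_zero_of_not_le hd hu]
        simp
    rw [L1, L2, ← Finset.sum_sub_distrib]
    have L3 : ∀ t : Fin n, (∑ u, (if 1 ≤ d t then cf A (d - Finsupp.single t 1) u *
            c (d - Finsupp.single t 1 + Finsupp.single u 1) else 0))
          - (∑ u, cf A d u * (if 1 ≤ (d + Finsupp.single u 1 : Fin n →₀ ℕ) t then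
            c (d + Finsupp.single u 1 - Finsupp.single t 1) else 0))
        = (2 * (d t : ℂ) - (A t : ℂ)) * c d := by
      intro t
      rw [← Finset.sum_sub_distrib]
      rw [Finset.sum_eq_single t]
      · -- diagonal term
        have e1 : (1:ℕ) ≤ (d + Finsupp.single t 1 : Fin n →₀ ℕ) t := by
          rw [add_single_apply, if_pos rfl]
          omega
        rw [if_pos e1, add_sub_single]
        by_cases ht : 1 ≤ d t
        · rw [if_pos ht, sub_add_single ht]
          have h1 : cf A (d - Finsupp.single t 1) t
              = (d t : ℂ) * ((A t : ℂ) - (d t : ℂ) + 1) := by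
            rw [cf_cast (sub_single_le hd t) t, sub_single_apply, if_pos rfl]
            have h2 := le_apply hd t
            have h3 : ((d t - 1 : ℕ) : ℂ) = (d t : ℂ) - 1 := by
              push_cast [Nat.cast_sub ht]
              ring
            rw [h3]
            ring
          rw [h1, cf_cast hd t]
          ring
        · rw [if_neg ht]
          have ht0 : d t = 0 := by omega
          rw [cf_cast hd t, ht0]
          push_cast
          ring
      · -- off-diagonal terms vanish
        intro u _ hut
        have h1 : (d - Finsupp.single t 1 : Fin n →₀ ℕ) u = d u := by
          rw [sub_single_apply, if_neg (fun h => hut h.symm), Nat.sub_zero]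
        have h2 : cf A (d - Finsupp.single t 1) u = cf A d u := by
          unfold cf
          rw [h1]
        have h3 : (d + Finsupp.single u 1 : Fin n →₀ ℕ) t = d t := by
          rw [add_single_apply, if_neg hut, Nat.add_zero]
        have h4 : d - Finsupp.single t 1 + Finsupp.single u 1
            = d + Finsupp.single u 1 - Finsupp.single t 1 :=
          sub_add_eq_add_sub d (fun h => hut h.symm)
        rw [h2, h3, h4, mul_ite, mul_zero, ite_sub_ite]
        simp
      · intro h
        exact absurd (Finset.mem_univ t) h
    rw [Finset.sum_congr rfl (fun t _ => L3 t), ← Finset.sum_mul]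
    congr 1
    have : (∑ t, (2 * (d t : ℂ) - (A t : ℂ))) = 2 * (wt d : ℂ) - (wt A : ℂ) := by
      rw [Finset.sum_sub_distrib, ← Finset.mul_sum]
      unfold wt
      push_cast
      ring
    rw [this]
  · simp [hd]


-- ### Projection to the box and compatibility

open MvPolynomial in
noncomputable def proj (A : Fin n →₀ ℕ) (p : MvPolynomial (Fin n) ℂ) : V n :=
  fun d => if d ≤ A then MvPolynomial.coeff d p else 0

open MvPolynomial in
lemma proj_mul_sigma (A : Fin n →₀ ℕ) (p : MvPolynomial (Fin n) ℂ) :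
    proj A (p * (∑ t : Fin n, X t)) = opE A (proj A p) := by
  funext d
  rw [opE_apply]
  unfold proj
  by_cases hd : d ≤ A
  · simp only [hd, if_true]
    rw [Finset.mul_sum, coeff_sum]
    refine Finset.sum_congr rfl fun t _ => ?_
    rw [coeff_mul_X']
    by_cases ht : t ∈ d.support
    · rw [if_pos ht, if_pos (by rwa [Finsupp.mem_support_iff, ← Nat.one_le_iff_ne_zero] at ht),
        if_pos (sub_single_le hd t)]
    · rw [if_neg ht, if_neg (by rwa [Finsupp.mem_support_iff, ← Nat.one_le_iff_ne_zero] at ht)]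
  · simp [hd]

open MvPolynomial in
lemma proj_mul_sigma_pow (A : Fin n →₀ ℕ) (p : MvPolynomial (Fin n) ℂ) (m : ℕ) :
    proj A (p * (∑ t : Fin n, X t) ^ m) = ((opE A) ^ m) (proj A p) := by
  induction m with
  | zero => simp
  | succ m ih =>
    rw [pow_succ, ← mul_assoc, proj_mul_sigma, ih, pow_succ', Module.End.mul_apply]

open MvPolynomial in
lemma opH_proj {A : Fin n →₀ ℕ} {i : ℕ} {r : MvPolynomial (Fin n) ℂ}
    (hr : r.IsHomogeneous i) :
    opH A (proj A r) = ((2 * (i:ℂ) - (wt A : ℂ))) • (proj A r) := by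
  funext d
  rw [opH_apply]
  unfold proj
  by_cases hd : d ≤ A
  · simp only [hd, if_true, Pi.smul_apply, smul_eq_mul]
    by_cases hc : MvPolynomial.coeff d r = 0
    · rw [hc, mul_zero, mul_zero]
    · have hwt : wt d = i := by
        have h1 := hr hc
        unfold wt
        rw [← h1, Finsupp.weight_apply, Finsupp.sum]
        simp only [smul_eq_mul, Pi.one_apply, mul_one]
        exact (Finset.sum_subset (Finset.subset_univ d.support)
          (fun x _ hx => Finsupp.notMem_support_iff.mp hx)).symm
      rw [hwt]
  · simp [hd]

lemma opF_pow_support (A : Fin n →₀ ℕ) (j : ℕ) :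
    ∀ (b : ℕ) (v : V n), (∀ d, v d ≠ 0 → wt d = j) →
      ∀ d, ((opF A ^ b) v) d ≠ 0 → wt d + b = j := by
  intro b
  induction b with
  | zero => intro v hv d hd; simpa using hv d (by simpa using hd)
  | succ b ih =>
    intro v hv d hd
    rw [pow_succ', Module.End.mul_apply] at hd
    rw [opF_apply] at hd
    by_cases hdA : d ≤ A
    · rw [if_pos hdA] at hd
      obtain ⟨u, _, hu⟩ := Finset.exists_ne_zero_of_sum_ne_zero hd
      have h1 : ((opF A ^ b) v) (d + Finsupp.single u 1) ≠ 0 := by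
        intro h
        rw [h, mul_zero] at hu
        exact hu rfl
      have h2 := ih v hv _ h1
      rw [wt_add_single] at h2
      omega
    · rw [if_neg hdA] at hd
      exact absurd rfl hd

lemma opF_nilpotent (A : Fin n →₀ ℕ) (i : ℕ) (v : V n)
    (hv : ∀ d, v d ≠ 0 → wt d = i) : ((opF A) ^ (i+1)) v = 0 := by
  funext d
  by_contra hd
  have := opF_pow_support A i (i+1) v hv d (by simpa using hd)
  omega


section AbstractSl2
variable {M : Type*} [AddCommGroup M] [Module ℂ M]

lemma end_apply_eq (T S : Module.End ℂ M) (h : T = S) (v : M) : T v = S v := by rw [h]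

lemma pow_succ_apply (E : Module.End ℂ M) (b : ℕ) (v : M) :
    (E ^ (b+1)) v = E ((E ^ b) v) := by
  rw [pow_succ', Module.End.mul_apply]

/-- H(E^b v) = (c+2b) • E^b v -/
lemma h_pow_e (E H : Module.End ℂ M) (hHE : H * E = E * H + 2 • E)
    (b : ℕ) (v : M) (c : ℂ) (hv : H v = c • v) :
    H ((E ^ b) v) = (c + 2 * b) • (E ^ b) v := by
  induction b with
  | zero => simpa using hv
  | succ b ih =>
    rw [pow_succ_apply]
    have h2 : H (E ((E^b) v)) = E (H ((E^b) v)) + (2:ℕ) • E ((E^b) v) := by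
      simpa [Module.End.mul_apply] using end_apply_eq _ _ hHE ((E^b) v)
    rw [h2, ih, map_smul, ← Nat.cast_smul_eq_nsmul ℂ, ← add_smul, ← pow_succ_apply]
    congr 1
    push_cast
    ring

/-- F(E^(a+1) v) = E^(a+1) (F v) - ((a+1)(c+a)) • E^a v -/
lemma f_pow_e (E F H : Module.End ℂ M) (hH : E * F - F * E = H)
    (hHE : H * E = E * H + 2 • E)
    (a : ℕ) (v : M) (c : ℂ) (hv : H v = c • v) :
    F ((E ^ (a+1)) v) = (E ^ (a+1)) (F v) - ((a+1) * (c + a)) • (E ^ a) v := by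
  have h2 : ∀ w : M, F (E w) = E (F w) - H w := by
    intro w
    have := end_apply_eq _ _ hH w
    simp only [LinearMap.sub_apply, Module.End.mul_apply] at this ⊢
    linear_combination (norm := abel) -this
  induction a with
  | zero =>
    have h1 := h2 v
    simp only [pow_zero, Module.End.one_apply, pow_one, Nat.cast_zero, add_zero, zero_add, one_mul]
    rw [h1, hv]
  | succ a ih =>
    rw [pow_succ_apply, h2, ih, map_sub, h_pow_e E H hHE (a+1) v c hv, map_smul,
      ← pow_succ_apply, ← pow_succ_apply]
    rw [sub_sub, sub_right_inj, ← add_smul]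
    congr 1
    push_cast
    ring

/-- Primitive-at-bottom string lemma: F v = 0, H v = -m v, E^m v = 0 ⇒ v = 0. -/
lemma string_zero (E F H : Module.End ℂ M) (hH : E * F - F * E = H)
    (hHE : H * E = E * H + 2 • E)
    (m : ℕ) (v : M) (hv : H v = (-(m:ℂ)) • v)
    (hFv : F v = 0) (hEv : (E ^ m) v = 0) : v = 0 := by
  have claim : ∀ j ≤ m, (F ^ j) ((E ^ j) v)
      = (∏ r ∈ Finset.range j, (((r:ℂ)+1) * ((m:ℂ) - r))) • v := by
    intro j hj
    induction j with
    | zero => simp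
    | succ j ih =>
      have hj' : j ≤ m := Nat.le_of_succ_le hj
      have h1 : (F ^ (j+1)) ((E ^ (j+1)) v) = (F ^ j) (F ((E ^ (j+1)) v)) := by
        rw [pow_succ, Module.End.mul_apply]
      rw [h1, f_pow_e E F H hH hHE j v _ hv, hFv, map_zero, zero_sub, map_neg, map_smul,
        ih hj', Finset.prod_range_succ, smul_smul]
      rw [← neg_smul]
      congr 1
      ring
  have h0 := claim m le_rfl
  rw [hEv, map_zero] at h0
  have hne : (∏ r ∈ Finset.range m, (((r:ℂ)+1) * ((m:ℂ) - r))) ≠ 0 := by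
    apply Finset.prod_ne_zero_iff.mpr
    intro r hr
    rw [Finset.mem_range] at hr
    apply mul_ne_zero
    · have h1 : ((r+1:ℕ):ℂ) ≠ 0 := Nat.cast_ne_zero.mpr (Nat.succ_ne_zero r)
      push_cast at h1
      exact h1
    · apply sub_ne_zero.mpr
      exact_mod_cast hr.ne'
  exact (smul_eq_zero.mp h0.symm).resolve_left hne

/-- Main abstract lemma: if H v = -m v, E^m v = 0 and F is nilpotent on v, then v = 0. -/
lemma sl2_injectivity (E F H : Module.End ℂ M) (hH : E * F - F * E = H)
    (hHE : H * E = E * H + 2 • E) (hHF : H * F = F * H - 2 • F) :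
    ∀ (p : ℕ) (m : ℕ) (v : M), H v = (-(m:ℂ)) • v → (E ^ m) v = 0 →
      (F ^ p) v = 0 → v = 0 := by
  intro p
  induction p with
  | zero => intro m v _ _ h; simpa using h
  | succ p ih =>
    intro m v hv hEv hFv
    -- first show F v = 0 using ih applied to F v with m+2
    have hHFv : H (F v) = (-((m+2 : ℕ) :ℂ)) • (F v) := by
      have h1 : H (F v) = F (H v) - (2:ℕ) • F v := by
        simpa [Module.End.mul_apply] using end_apply_eq _ _ hHF v
      rw [h1, hv, map_smul, ← Nat.cast_smul_eq_nsmul ℂ, ← sub_smul]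
      congr 1
      push_cast
      ring
    have hEFv : (E ^ (m+2)) (F v) = 0 := by
      have h1 := f_pow_e E F H hH hHE (m+1) v (-(m:ℂ)) hv
      -- F (E^(m+2) v) = E^(m+2) (F v) - c • E^(m+1) v
      have h2 : (E ^ (m+2)) v = 0 := by
        have : (m + 2) = 2 + m := by ring
        rw [this, pow_add, Module.End.mul_apply, hEv, map_zero]
      have h3 : (E ^ (m+1)) v = 0 := by
        have : (m + 1) = 1 + m := by ring
        rw [this, pow_add, Module.End.mul_apply, hEv, map_zero]
      rw [h2, h3, map_zero, smul_zero, sub_zero] at h1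
      exact h1.symm
    have hFpFv : (F ^ p) (F v) = 0 := by
      have : (F ^ (p+1)) v = (F ^ p) (F v) := by rw [pow_succ, Module.End.mul_apply]
      rw [← this, hFv]
    have hFv0 : F v = 0 := ih (m+2) (F v) hHFv hEFv hFpFv
    exact string_zero E F H hH hHE m v hv hFv0 hEv

end AbstractSl2

-- ### Membership characterization and key lemma

open MvPolynomial in
lemma mem_monomial_ideal_iff (Bad : Set (Fin n →₀ ℕ))
    (hBad : ∀ e e' : Fin n →₀ ℕ, e ∈ Bad → e ≤ e' → e' ∈ Bad)
    (r : MvPolynomial (Fin n) ℂ) :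
    r ∈ Ideal.span ((fun s => monomial s (1:ℂ)) '' Bad) ↔
      ∀ e ∈ r.support, e ∈ Bad := by
  rw [MvPolynomial.mem_ideal_span_monomial_image]
  constructor
  · intro h e he
    obtain ⟨e', he', hle⟩ := h e he
    exact hBad e' e he' hle
  · intro h e he
    exact ⟨e, h e he, le_rfl⟩

open MvPolynomial in
lemma key_lemma (k : ℕ) (Good : Set (Fin n →₀ ℕ))
    (hGoodwt : ∀ A ∈ Good, wt A = k)
    (I : Ideal (MvPolynomial (Fin n) ℂ))
    (hI : I = Ideal.span ((fun s => monomial s (1:ℂ)) '' {e | ∀ A ∈ Good, ¬ e ≤ A}))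
    (i : ℕ) (h2i : 2 * i < k) (r : MvPolynomial (Fin n) ℂ)
    (hr : r.IsHomogeneous i)
    (hmem : r * (∑ t : Fin n, X t) ^ (k - 2 * i) ∈ I) : r ∈ I := by
  have hBad : ∀ e e' : Fin n →₀ ℕ, (∀ A ∈ Good, ¬ e ≤ A) → e ≤ e' →
      (∀ A ∈ Good, ¬ e' ≤ A) := by
    intro e e' he hle A hA hle'
    exact he A hA (hle.trans hle')
  rw [hI, mem_monomial_ideal_iff {e | ∀ A ∈ Good, ¬ e ≤ A} (fun e e' he hle => hBad e e' he hle)] at hmem ⊢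
  intro e0 he0
  by_contra hbad
  simp only [Set.mem_setOf_eq] at hbad
  push_neg at hbad
  obtain ⟨A, hA, he0A⟩ := hbad
  -- set up the sl2 representation on the box of A
  set v : V n := proj A r with hv
  have hv0 : v e0 ≠ 0 := by
    simp only [hv]
    unfold proj
    rw [if_pos he0A]
    exact MvPolynomial.mem_support_iff.mp he0
  apply hv0
  have hwtA : wt A = k := hGoodwt A hA
  -- H eigenvector
  have hH : opH A v = (-(((k - 2*i : ℕ)) : ℂ)) • v := by
    rw [hv, opH_proj hr, hwtA]
    congr 1
    have : ((k - 2*i : ℕ) : ℂ) = (k : ℂ) - 2 * i := by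
      push_cast [Nat.cast_sub (le_of_lt h2i)]
      ring
    rw [this]
    ring
  -- E^m kills v
  have hE : ((opE A) ^ (k - 2*i)) v = 0 := by
    rw [hv, ← proj_mul_sigma_pow]
    funext d
    unfold proj
    by_cases hd : d ≤ A
    · rw [if_pos hd]
      by_contra hc
      have hd' : d ∈ (r * (∑ t : Fin n, X t) ^ (k - 2*i)).support :=
        MvPolynomial.mem_support_iff.mpr (by simpa using hc)
      exact (hmem d hd' A hA) hd
    · rw [if_neg hd]
      simp
  -- F nilpotent on v
  have hF : ((opF A) ^ (i+1)) v = 0 := by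
    apply opF_nilpotent
    intro d hd
    simp only [hv] at hd
    unfold proj at hd
    by_cases hdA : d ≤ A
    · rw [if_pos hdA] at hd
      have h1 := hr hd
      rw [show (Finsupp.weight 1 : (Fin n →₀ ℕ) →+ ℕ) = Finsupp.weight (fun _ => 1) from rfl,
        ← Finsupp.degree_eq_weight_one] at h1
      unfold wt
      rw [← h1, Finsupp.degree_apply]
      exact (Finset.sum_subset (Finset.subset_univ d.support)
        (fun x _ hx => Finsupp.notMem_support_iff.mp hx)).symm
    · rw [if_neg hdA] at hd
      exact absurd rfl hd
  have := sl2_injectivity (opE A) (opF A) (opH A) (hH_eq A) (hHE_eq A) (hHF_eq A)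
    (i+1) (k - 2*i) v hH hE hF
  rw [this]
  rfl


end IHLAux


open MvPolynomial

/-- Let `m 1, …, m s` (`s ≥ 1`) be monomials of degree `k ≥ 1` in `ℂ[x_1, …, x_n]`
(identified with their exponent vectors), let `I` be the ideal generated by all
monomials dividing none of the `m j`, and `R = ℂ[x_1, …, x_n]/I`. Then for the image
`ω` of `x_1 + … + x_n`, and every `i` with `2i < k`, multiplication by `ω^(k-2i)` is
injective on the degree-`i` graded piece `R_i` (the image of the homogeneous
degree-`i` polynomials). -/
theorem ihl_of_pure_monomial_quotient
    (n s k : ℕ) (hs : 1 ≤ s) (hk : 1 ≤ k) (m : Fin s → Fin n → ℕ)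
    (hdeg : ∀ j, ∑ t, m j t = k)
    (I : Ideal (MvPolynomial (Fin n) ℂ))
    (hI : I = Ideal.span
      {p | ∃ d : Fin n → ℕ, (∀ j, ¬ d ≤ m j) ∧
        p = MvPolynomial.monomial (Finsupp.equivFunOnFinite.symm d) (1 : ℂ)})
    (ω : MvPolynomial (Fin n) ℂ ⧸ I)
    (hω : ω = Ideal.Quotient.mk I (∑ t : Fin n, X t)) :
    ∀ i : ℕ, 2 * i < k →
      Set.InjOn (fun a : MvPolynomial (Fin n) ℂ ⧸ I => a * ω ^ (k - 2 * i))
        (((MvPolynomial.homogeneousSubmodule (Fin n) ℂ i).map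
          (Ideal.Quotient.mkₐ ℂ I).toLinearMap : Submodule ℂ _) :
            Set (MvPolynomial (Fin n) ℂ ⧸ I)) := by
  intro i h2i
  -- the "good" exponents
  set Good : Set (Fin n →₀ ℕ) :=
    Set.range (fun j => Finsupp.equivFunOnFinite.symm (m j)) with hGood
  have hle_iff : ∀ (d f : Fin n → ℕ),
      (Finsupp.equivFunOnFinite.symm d ≤ Finsupp.equivFunOnFinite.symm f) ↔ d ≤ f := by
    intro d f
    rw [Finsupp.le_def]
    constructor
    · intro h t
      simpa using h t
    · intro h t
      simpa using h t
  have hIset : {p : MvPolynomial (Fin n) ℂ | ∃ d : Fin n → ℕ, (∀ j, ¬ d ≤ m j) ∧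
        p = MvPolynomial.monomial (Finsupp.equivFunOnFinite.symm d) (1 : ℂ)}
      = (fun s => monomial s (1:ℂ)) '' {e | ∀ A ∈ Good, ¬ e ≤ A} := by
    ext p
    constructor
    · rintro ⟨d, hd, rfl⟩
      refine ⟨Finsupp.equivFunOnFinite.symm d, ?_, rfl⟩
      rintro A ⟨j, rfl⟩ hle
      exact hd j ((hle_iff d (m j)).mp hle)
    · rintro ⟨e, he, rfl⟩
      refine ⟨⇑e, ?_, by rw [Finsupp.equivFunOnFinite_symm_coe]⟩
      intro j hle
      refine he (Finsupp.equivFunOnFinite.symm (m j)) ⟨j, rfl⟩ ?_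
      rw [← Finsupp.equivFunOnFinite_symm_coe e] at hle ⊢
      exact (hle_iff _ _).mpr hle
  have hI' : I = Ideal.span ((fun s => monomial s (1:ℂ)) '' {e | ∀ A ∈ Good, ¬ e ≤ A}) := by
    rw [hI, hIset]
  have hGoodwt : ∀ A ∈ Good, IHLAux.wt A = k := by
    rintro A ⟨j, rfl⟩
    unfold IHLAux.wt
    rw [← hdeg j]
    refine Finset.sum_congr rfl fun t _ => ?_
    simp
  -- now the injectivity
  rintro a ha b hb hab
  obtain ⟨p, hp, rfl⟩ := ha
  obtain ⟨q, hq, rfl⟩ := hb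
  rw [SetLike.mem_coe, mem_homogeneousSubmodule] at hp hq
  simp only [AlgHom.toLinearMap_apply, Ideal.Quotient.mkₐ_eq_mk] at hab ⊢
  have hab' : Ideal.Quotient.mk I ((p - q) * (∑ t : Fin n, X t) ^ (k - 2 * i)) = 0 := by
    rw [sub_mul, map_sub, sub_eq_zero, map_mul, map_mul, map_pow, ← hω]
    exact hab
  rw [Ideal.Quotient.eq_zero_iff_mem] at hab'
  have hkey := IHLAux.key_lemma k Good hGoodwt I hI' i h2i (p - q) (hp.sub hq) hab'
  exact Ideal.Quotient.eq.mpr hkey
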